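/- Let (X, d_X) be a metric space, ω a nonprincipal ultrafilter on ℕ, and (f_m) a sequence of n-dimensional dilated cubes f_m: {0,1,...,k_m}ⁿ → X with dilatation constants C_m, such that lim_ω k_m = ∞. If (d_m) is an ω-divergent sequence of positive reals with lim_ω (C_m·k_m)/d_m = s for some 0 ≤ s < ∞, then the asymptotic cone Cone_ω(X, c, d) with c = (f_m(0)) contains an isometric copy of the cube [0,s]ⁿ with the ℓ¹-metric. -/

import Mathlib

open Filter

/-- A sequence of `n`-dimensional dilated cubes of sizes `k m` with dilatation constants
`C m`, with `lim_ω k_m = ∞` and `lim_ω C_m k_m / d_m = s < ∞`, yields an isometric copy of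
the cube `[0,s]^n` (with the `ℓ¹`-metric) in the asymptotic cone `Cone_ω(X, c, d)` with
basepoints `c = (f_m(0))`; the copy is given at the level of representative sequences. -/
theorem cube_in_asymptotic_cone {X : Type*} [PseudoMetricSpace X] (n : ℕ)
    (ω : Ultrafilter ℕ) (hω : (ω : Filter ℕ) ≤ cofinite)
    (k : ℕ → ℕ) (C : ℕ → ℝ) (hC : ∀ m, 1 ≤ C m)
    (f : ∀ m, (Fin n → Fin (k m + 1)) → X)
    (hcube : ∀ m (a b : Fin n → Fin (k m + 1)),
      dist (f m a) (f m b) = C m * ∑ i, |((a i : ℕ) : ℝ) - ((b i : ℕ) : ℝ)|)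
    (hk : Tendsto (fun m => ((k m : ℕ) : ℝ)) (ω : Filter ℕ) atTop)
    (d : ℕ → ℝ) (hd : ∀ m, 0 < d m) (hdiv : Tendsto d (ω : Filter ℕ) atTop)
    (s : ℝ) (hs : 0 ≤ s)
    (hlim : Tendsto (fun m => C m * (k m : ℝ) / d m) (ω : Filter ℕ) (nhds s)) :
    ∃ g : (Fin n → ℝ) → ℕ → X,
      (g (fun _ => 0) = fun m => f m (fun _ => 0)) ∧
      ∀ t u : Fin n → ℝ, (∀ i, t i ∈ Set.Icc (0 : ℝ) s) → (∀ i, u i ∈ Set.Icc (0 : ℝ) s) →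
        Tendsto (fun m => dist (g t m) (g u m) / d m) (ω : Filter ℕ)
          (nhds (∑ i, |t i - u i|)) := by
  have hCpos : ∀ m, (0:ℝ) < C m := fun m => lt_of_lt_of_le one_pos (hC m)
  have hCdnn : ∀ m, (0:ℝ) ≤ C m / d m := fun m => div_nonneg (hCpos m).le (hd m).le
  -- the approximating integer coordinates
  set c : ℝ → ℕ → ℕ := fun v m => min ⌊v * d m / C m⌋₊ (k m) with hcdef
  have hlt : ∀ v m, c v m < k m + 1 := fun v m => Nat.lt_succ_of_le (min_le_right _ _)
  refine ⟨fun t m => f m (fun i => ⟨c (t i) m, hlt _ m⟩), ?_, ?_⟩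
  · refine funext fun m => ?_
    show f m (fun i => ⟨c 0 m, hlt 0 m⟩) = f m fun _ => 0
    congr 1
    funext i
    ext
    simp [hcdef]
  · -- C/d → 0
    have hCd : Tendsto (fun m => C m / d m) (ω : Filter ℕ) (nhds 0) := by
      have hev : ∀ᶠ m in (ω : Filter ℕ),
          (C m * (k m : ℝ) / d m) * ((k m : ℝ))⁻¹ = C m / d m := by
        filter_upwards [hk.eventually_ge_atTop 1] with m hm
        have : ((k m : ℝ)) ≠ 0 := by linarith
        rw [div_mul_eq_mul_div, mul_right_comm, inv_mul_cancel_right₀ this]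
      have := hlim.mul hk.inv_tendsto_atTop
      rw [mul_zero] at this
      exact Tendsto.congr' hev this
    -- C/d * k → s
    have hCk : Tendsto (fun m => C m / d m * (k m : ℝ)) (ω : Filter ℕ) (nhds s) := by
      refine hlim.congr fun m => ?_
      ring
    -- key convergence of rescaled coordinates
    have aux : ∀ v : ℝ, v ∈ Set.Icc (0:ℝ) s →
        Tendsto (fun m => C m / d m * ((c v m : ℕ) : ℝ)) (ω : Filter ℕ) (nhds v) := by
      intro v hv
      obtain ⟨hv0, hvs⟩ := hv
      have hcast : ∀ m, ((c v m : ℕ) : ℝ) = min ((⌊v * d m / C m⌋₊ : ℝ)) ((k m : ℝ)) := by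
        intro m
        simp [hcdef, Nat.cast_min]
      have heq : ∀ m, C m / d m * ((c v m : ℕ) : ℝ)
          = min (C m / d m * (⌊v * d m / C m⌋₊ : ℝ)) (C m / d m * (k m : ℝ)) := by
        intro m
        rw [hcast, mul_min_of_nonneg _ _ (hCdnn m)]
      have hfloor : Tendsto (fun m => C m / d m * (⌊v * d m / C m⌋₊ : ℝ))
          (ω : Filter ℕ) (nhds v) := by
        have hxnn : ∀ m, (0:ℝ) ≤ v * d m / C m := fun m =>
          div_nonneg (mul_nonneg hv0 (hd m).le) (hCpos m).le
        have hub : ∀ m, C m / d m * (⌊v * d m / C m⌋₊ : ℝ) ≤ v := by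
          intro m
          have h1 : (⌊v * d m / C m⌋₊ : ℝ) ≤ v * d m / C m := Nat.floor_le (hxnn m)
          have h2 : C m / d m * (v * d m / C m) = v := by
            have hC0 := (hCpos m).ne'
            have hd0 := (hd m).ne'
            field_simp
          calc C m / d m * (⌊v * d m / C m⌋₊ : ℝ)
              ≤ C m / d m * (v * d m / C m) := by
                exact mul_le_mul_of_nonneg_left h1 (hCdnn m)
            _ = v := h2
        have hlb : ∀ m, v - C m / d m ≤ C m / d m * (⌊v * d m / C m⌋₊ : ℝ) := by
          intro m
          have h1 : v * d m / C m - 1 ≤ (⌊v * d m / C m⌋₊ : ℝ) :=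
            (Nat.sub_one_lt_floor _).le
          have h2 : C m / d m * (v * d m / C m - 1) = v - C m / d m := by
            have hC0 := (hCpos m).ne'
            have hd0 := (hd m).ne'
            field_simp
          calc v - C m / d m = C m / d m * (v * d m / C m - 1) := h2.symm
            _ ≤ C m / d m * (⌊v * d m / C m⌋₊ : ℝ) :=
                mul_le_mul_of_nonneg_left h1 (hCdnn m)
        have hlow : Tendsto (fun m => v - C m / d m) (ω : Filter ℕ) (nhds v) := by
          have := (tendsto_const_nhds (x := v) (f := (ω : Filter ℕ))).sub hCd
          simpa using this
        exact tendsto_of_tendsto_of_tendsto_of_le_of_le hlow tendsto_const_nhds hlb hub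
      have := hfloor.min hCk
      rw [min_eq_left hvs] at this
      exact this.congr fun m => (heq m).symm
    intro t u ht hu
    have heq : ∀ m, dist (f m (fun i => ⟨c (t i) m, hlt _ m⟩))
          (f m (fun i => ⟨c (u i) m, hlt _ m⟩)) / d m
        = ∑ i, |C m / d m * ((c (t i) m : ℕ) : ℝ) - C m / d m * ((c (u i) m : ℕ) : ℝ)| := by
      intro m
      rw [hcube]
      rw [mul_comm, mul_div_assoc, Finset.sum_mul]
      refine Finset.sum_congr rfl fun i _ => ?_
      rw [show ((⟨c (t i) m, hlt _ m⟩ : Fin (k m + 1)) : ℕ) = c (t i) m from rfl,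
        show ((⟨c (u i) m, hlt _ m⟩ : Fin (k m + 1)) : ℕ) = c (u i) m from rfl,
        ← mul_sub, abs_mul, abs_of_nonneg (hCdnn m), mul_comm]
    have hsum : Tendsto
        (fun m => ∑ i, |C m / d m * ((c (t i) m : ℕ) : ℝ) - C m / d m * ((c (u i) m : ℕ) : ℝ)|)
        (ω : Filter ℕ) (nhds (∑ i, |t i - u i|)) := by
      refine tendsto_finset_sum _ fun i _ => ?_
      exact ((aux (t i) (ht i)).sub (aux (u i) (hu i))).abs
    exact hsum.congr fun m => (heq m).symm
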